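/- In the setting of the parametric quadratic program min_x (1/2)xᵀQx + (q + Fλ)ᵀx subject to Gx ≤ h with Q positive definite and nonempty compact feasible polyhedron, the optimal-solution map λ ↦ x*(λ) is continuous on ℝᵐ. -/

import Mathlib

open Matrix

private lemma dps_nonneg {n : ℕ} (z : Fin n → ℝ) : 0 ≤ z ⬝ᵥ z :=
  Finset.sum_nonneg fun i _ => mul_self_nonneg (z i)

private lemma symQ {n : ℕ} (Q : Matrix (Fin n) (Fin n) ℝ) (hQsymm : Q.IsSymm)
    (x y : Fin n → ℝ) : x ⬝ᵥ (Q *ᵥ y) = y ⬝ᵥ (Q *ᵥ x) := by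
  rw [Matrix.dotProduct_mulVec, ← Matrix.mulVec_transpose, hQsymm, dotProduct_comm]

private lemma mu_bound {n : ℕ} (Q : Matrix (Fin n) (Fin n) ℝ) (hQ : Q.PosDef) :
    ∃ μ : ℝ, 0 < μ ∧ ∀ z : Fin n → ℝ, μ * (z ⬝ᵥ z) ≤ z ⬝ᵥ (Q *ᵥ z) := by
  have hg : Continuous fun z : Fin n → ℝ => z ⬝ᵥ (Q *ᵥ z) := by
    simp only [dotProduct, Matrix.mulVec]
    fun_prop
  have hg2 : Continuous fun z : Fin n → ℝ => z ⬝ᵥ z := by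
    simp only [dotProduct]
    fun_prop
  set S : Set (Fin n → ℝ) := {z | z ⬝ᵥ z = 1} with hSdef
  have hmem : ∀ z : Fin n → ℝ, z ≠ 0 → ((Real.sqrt (z ⬝ᵥ z))⁻¹ • z) ∈ S ∧ 0 < z ⬝ᵥ z := by
    intro z hz
    have hpos : 0 < z ⬝ᵥ z := by
      rcases lt_or_eq_of_le (dps_nonneg z) with h | h
      · exact h
      · exact absurd (dotProduct_self_eq_zero.1 h.symm) hz
    refine ⟨?_, hpos⟩
    have hs : Real.sqrt (z ⬝ᵥ z) ^ 2 = z ⬝ᵥ z := Real.sq_sqrt hpos.le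
    have hsne : Real.sqrt (z ⬝ᵥ z) ≠ 0 := by positivity
    show ((Real.sqrt (z ⬝ᵥ z))⁻¹ • z) ⬝ᵥ ((Real.sqrt (z ⬝ᵥ z))⁻¹ • z) = 1
    rw [smul_dotProduct, dotProduct_smul, smul_eq_mul, smul_eq_mul, ← hs]
    field_simp
    simp only [hs]
  by_cases hSne : S.Nonempty
  · have hScl : IsClosed S := isClosed_eq hg2 continuous_const
    have hSsub : S ⊆ Metric.closedBall 0 1 := by
      intro z hz
      rw [Metric.mem_closedBall, dist_zero_right]
      rw [pi_norm_le_iff_of_nonneg zero_le_one]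
      intro i
      have h1 : z i * z i ≤ z ⬝ᵥ z := by
        have := Finset.single_le_sum (f := fun j => z j * z j)
          (fun j _ => mul_self_nonneg (z j)) (Finset.mem_univ i)
        simpa [dotProduct] using this
      rw [hz] at h1
      rw [Real.norm_eq_abs]
      nlinarith [abs_nonneg (z i), sq_abs (z i)]
    have hScpt : IsCompact S :=
      (isCompact_closedBall (0 : Fin n → ℝ) 1).of_isClosed_subset hScl hSsub
    obtain ⟨z₀, hz₀S, hz₀min⟩ := hScpt.exists_isMinOn hSne hg.continuousOn
    have hz₀ne : z₀ ≠ 0 := by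
      intro h0
      rw [h0] at hz₀S
      simp [hSdef, zero_dotProduct] at hz₀S
    refine ⟨z₀ ⬝ᵥ (Q *ᵥ z₀), ?_, ?_⟩
    · have := hQ.dotProduct_mulVec_pos hz₀ne
      simpa using this
    · intro z
      by_cases hz : z = 0
      · simp [hz]
      · obtain ⟨huS, hpos⟩ := hmem z hz
        have hs : Real.sqrt (z ⬝ᵥ z) ^ 2 = z ⬝ᵥ z := Real.sq_sqrt hpos.le
        have hsne : Real.sqrt (z ⬝ᵥ z) ≠ 0 := by positivity
        set t := Real.sqrt (z ⬝ᵥ z) with htdef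
        have hmin : z₀ ⬝ᵥ (Q *ᵥ z₀) ≤ (t⁻¹ • z) ⬝ᵥ (Q *ᵥ (t⁻¹ • z)) := hz₀min huS
        have hexp : (t⁻¹ • z) ⬝ᵥ (Q *ᵥ (t⁻¹ • z)) = t⁻¹ * (t⁻¹ * (z ⬝ᵥ (Q *ᵥ z))) := by
          rw [Matrix.mulVec_smul, smul_dotProduct, dotProduct_smul,
            smul_eq_mul, smul_eq_mul]
        rw [hexp] at hmin
        have ht : 0 < t := by positivity
        have htinv : 0 < t⁻¹ := by positivity
        have h2 : (z₀ ⬝ᵥ (Q *ᵥ z₀)) * (z ⬝ᵥ z) ≤ (t⁻¹ * (t⁻¹ * (z ⬝ᵥ (Q *ᵥ z)))) * (z ⬝ᵥ z) := by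
          nlinarith
        have h3 : (t⁻¹ * (t⁻¹ * (z ⬝ᵥ (Q *ᵥ z)))) * (z ⬝ᵥ z) = z ⬝ᵥ (Q *ᵥ z) := by
          rw [← hs]
          have hti : t⁻¹ * t = 1 := inv_mul_cancel₀ hsne
          linear_combination ((z ⬝ᵥ (Q *ᵥ z)) * (t⁻¹ * t + 1)) * hti
        linarith
  · refine ⟨1, one_pos, fun z => ?_⟩
    by_cases hz : z = 0
    · simp [hz]
    · exact absurd ⟨_, (hmem z hz).1⟩ hSne

private lemma cs_dot {n : ℕ} (v w : Fin n → ℝ) : (v ⬝ᵥ w)^2 ≤ (v ⬝ᵥ v) * (w ⬝ᵥ w) := by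
  have := Finset.sum_mul_sq_le_sq_mul_sq Finset.univ v w
  simpa only [dotProduct, pow_two] using this

/-- For the parametric QP with positive definite `Q` and nonempty compact
polyhedral feasible set, the optimal-solution map `λ ↦ x*(λ)` is continuous on `ℝᵐ`. -/
theorem stmt1 {n m p : ℕ}
    (Q : Matrix (Fin n) (Fin n) ℝ) (hQsymm : Q.IsSymm) (hQ : Q.PosDef)
    (q : Fin n → ℝ) (F : Matrix (Fin n) (Fin m) ℝ)
    (G : Matrix (Fin p) (Fin n) ℝ) (h : Fin p → ℝ)
    (K : Set (Fin n → ℝ)) (hK : K = {x | ∀ i, (G *ᵥ x) i ≤ h i})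
    (hne : K.Nonempty) (hcpt : IsCompact K)
    (xstar : (Fin m → ℝ) → (Fin n → ℝ))
    (hxstar : ∀ lam : Fin m → ℝ, xstar lam ∈ K ∧
      IsMinOn (fun y => (1 / 2) * (y ⬝ᵥ (Q *ᵥ y)) + (q + F *ᵥ lam) ⬝ᵥ y) K (xstar lam)) :
    Continuous xstar := by
  have hsym : ∀ x y : Fin n → ℝ, x ⬝ᵥ (Q *ᵥ y) = y ⬝ᵥ (Q *ᵥ x) := by
    intro x y
    rw [Matrix.dotProduct_mulVec, ← Matrix.mulVec_transpose, hQsymm, dotProduct_comm]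
  obtain ⟨μ, hμ, hμb⟩ := mu_bound Q hQ
  -- midpoints stay in K
  have hKmid : ∀ x ∈ K, ∀ y ∈ K, (1/2 : ℝ) • (x + y) ∈ K := by
    subst hK
    intro x hx y hy i
    have hx' := hx i
    have hy' := hy i
    rw [Matrix.mulVec_smul, Matrix.mulVec_add]
    simp only [Pi.smul_apply, Pi.add_apply, smul_eq_mul]
    linarith
  -- midpoint identity
  have hiden : ∀ (c x y : Fin n → ℝ),
      ((1/2) * (x ⬝ᵥ (Q *ᵥ x)) + c ⬝ᵥ x) + ((1/2) * (y ⬝ᵥ (Q *ᵥ y)) + c ⬝ᵥ y)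
        - 2 * ((1/2) * (((1/2:ℝ) • (x+y)) ⬝ᵥ (Q *ᵥ ((1/2:ℝ) • (x+y))))
            + c ⬝ᵥ ((1/2:ℝ) • (x+y)))
      = (1/4) * ((x - y) ⬝ᵥ (Q *ᵥ (x - y))) := by
    intro c x y
    have h1 := hsym x y
    simp only [Matrix.mulVec_add, Matrix.mulVec_smul, Matrix.mulVec_sub,
      dotProduct_add, add_dotProduct, dotProduct_sub,
      sub_dotProduct, dotProduct_smul, smul_dotProduct, smul_eq_mul]
    linarith
  -- strong minimality
  have hstrong : ∀ lam : Fin m → ℝ, ∀ y ∈ K,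
      ((1/2) * ((xstar lam) ⬝ᵥ (Q *ᵥ (xstar lam))) + (q + F *ᵥ lam) ⬝ᵥ (xstar lam))
        + (μ/4) * ((xstar lam - y) ⬝ᵥ (xstar lam - y))
      ≤ (1/2) * (y ⬝ᵥ (Q *ᵥ y)) + (q + F *ᵥ lam) ⬝ᵥ y := by
    intro lam y hy
    obtain ⟨hxK, hxmin⟩ := hxstar lam
    have hmK := hKmid (xstar lam) hxK y hy
    have hmin : (1/2) * ((xstar lam) ⬝ᵥ (Q *ᵥ (xstar lam))) + (q + F *ᵥ lam) ⬝ᵥ (xstar lam)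
        ≤ (1/2) * (((1/2:ℝ) • (xstar lam + y)) ⬝ᵥ (Q *ᵥ ((1/2:ℝ) • (xstar lam + y))))
          + (q + F *ᵥ lam) ⬝ᵥ ((1/2:ℝ) • (xstar lam + y)) := hxmin hmK
    have hid := hiden (q + F *ᵥ lam) (xstar lam) y
    have hQd := hμb (xstar lam - y)
    linarith
  -- cross (Lipschitz-type) bound on squared distance
  have hcross : ∀ lam1 lam2 : Fin m → ℝ,
      (μ/2) * ((xstar lam1 - xstar lam2) ⬝ᵥ (xstar lam1 - xstar lam2))
      ≤ (F *ᵥ (lam1 - lam2)) ⬝ᵥ (xstar lam2 - xstar lam1) := by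
    intro lam1 lam2
    have h12 := hstrong lam1 (xstar lam2) (hxstar lam2).1
    have h21 := hstrong lam2 (xstar lam1) (hxstar lam1).1
    have hdd : (xstar lam2 - xstar lam1) ⬝ᵥ (xstar lam2 - xstar lam1)
        = (xstar lam1 - xstar lam2) ⬝ᵥ (xstar lam1 - xstar lam2) := by
      rw [show xstar lam2 - xstar lam1 = -(xstar lam1 - xstar lam2) by abel,
        neg_dotProduct, dotProduct_neg, neg_neg]
    rw [hdd] at h21
    have e1 : (F *ᵥ (lam1 - lam2)) ⬝ᵥ (xstar lam2 - xstar lam1)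
        = ((q + F *ᵥ lam1) ⬝ᵥ (xstar lam2) - (q + F *ᵥ lam2) ⬝ᵥ (xstar lam2))
          + ((q + F *ᵥ lam2) ⬝ᵥ (xstar lam1) - (q + F *ᵥ lam1) ⬝ᵥ (xstar lam1)) := by
      simp only [Matrix.mulVec_sub, sub_dotProduct, dotProduct_sub,
        add_dotProduct]
      ring
    rw [e1]
    linarith
  -- squared-distance bound
  have hDbound : ∀ lam1 lam2 : Fin m → ℝ,
      (xstar lam1 - xstar lam2) ⬝ᵥ (xstar lam1 - xstar lam2)
      ≤ (4/μ^2) * ((F *ᵥ (lam1 - lam2)) ⬝ᵥ (F *ᵥ (lam1 - lam2))) := by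
    intro lam1 lam2
    set d := xstar lam1 - xstar lam2 with hd
    set v := F *ᵥ (lam1 - lam2) with hv
    have hD0 : 0 ≤ d ⬝ᵥ d := Finset.sum_nonneg fun i _ => mul_self_nonneg (d i)
    have hV0 : 0 ≤ v ⬝ᵥ v := Finset.sum_nonneg fun i _ => mul_self_nonneg (v i)
    have hc : μ / 2 * (d ⬝ᵥ d) ≤ v ⬝ᵥ (xstar lam2 - xstar lam1) := hcross lam1 lam2
    have hnd : xstar lam2 - xstar lam1 = -d := by rw [hd]; abel
    rw [hnd, dotProduct_neg] at hc
    have hcs : (v ⬝ᵥ d)^2 ≤ (v ⬝ᵥ v) * (d ⬝ᵥ d) := cs_dot v d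
    by_cases hD : d ⬝ᵥ d = 0
    · rw [hD]; positivity
    · have hDpos : 0 < d ⬝ᵥ d := lt_of_le_of_ne hD0 (Ne.symm hD)
      have h1 : (μ/2 * (d ⬝ᵥ d))^2 ≤ (v ⬝ᵥ d)^2 := by
        have := pow_le_pow_left₀ (by positivity) hc 2
        simpa [neg_sq] using this
      have h2 : (μ/2 * (d ⬝ᵥ d))^2 ≤ (v ⬝ᵥ v) * (d ⬝ᵥ d) := h1.trans hcs
      rw [div_mul_eq_mul_div, le_div_iff₀ (by positivity)]
      nlinarith [h2, hDpos]
  -- conclude continuity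
  refine continuous_iff_continuousAt.2 fun lam0 => ?_
  rw [ContinuousAt, tendsto_iff_dist_tendsto_zero]
  have hFc : Continuous fun lam : Fin m → ℝ =>
      Real.sqrt ((4/μ^2) * ((F *ᵥ (lam - lam0)) ⬝ᵥ (F *ᵥ (lam - lam0)))) := by
    apply Continuous.sqrt
    apply continuous_const.mul
    simp only [dotProduct, Matrix.mulVec]
    fun_prop
  have hbound : ∀ lam : Fin m → ℝ, dist (xstar lam) (xstar lam0)
      ≤ Real.sqrt ((4/μ^2) * ((F *ᵥ (lam - lam0)) ⬝ᵥ (F *ᵥ (lam - lam0)))) := by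
    intro lam
    rw [dist_eq_norm]
    rw [pi_norm_le_iff_of_nonneg (Real.sqrt_nonneg _)]
    intro i
    set d := xstar lam - xstar lam0 with hd
    have hdi : (d i)^2 ≤ d ⬝ᵥ d := by
      have := Finset.single_le_sum (f := fun j => d j * d j)
        (fun j _ => mul_self_nonneg (d j)) (Finset.mem_univ i)
      simpa [dotProduct, pow_two] using this
    rw [Real.norm_eq_abs]
    apply Real.abs_le_sqrt
    exact hdi.trans (hDbound lam lam0)
  refine squeeze_zero (fun t => dist_nonneg) hbound ?_
  have h0 : Real.sqrt ((4/μ^2) * ((F *ᵥ (lam0 - lam0)) ⬝ᵥ (F *ᵥ (lam0 - lam0)))) = 0 := by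
    simp [sub_self, Matrix.mulVec_zero]
  rw [← h0]
  exact hFc.continuousAt
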